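/- Let X be a finite set, E*₀,...,E*_D diagonal idempotents in Mat_X(ℝ) summing to I with E*ᵢE*ⱼ = δᵢⱼE*ᵢ, and A ∈ Mat_X(ℝ) with E*ᵢ A E*ₕ = 0 for |i−h| ≠ 1. Let L = ∑_{i=1}^D E*_{i−1} A E*ᵢ and R = ∑_{i=0}^{D−1} E*_{i+1} A E*ᵢ, and let A* = ∑_{i=0}^D θ*ᵢ E*ᵢ for real scalars θ*₀,...,θ*_D. Then for 1 ≤ i ≤ D: E*_{i−1} A² A* A E*ᵢ = θ*_{i−1} R L² E*ᵢ + θ*_{i−1} L R L E*ᵢ + θ*_{i+1} L² R E*ᵢ, and E*_{i−1} A A* A² E*ᵢ = θ*_{i−2} R L² E*ᵢ + θ*ᵢ L R L E*ᵢ + θ*ᵢ L² R E*ᵢ (with θ*_{−1}, θ*_{D+1} arbitrary since the corresponding terms vanish). -/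

import Mathlib

theorem stmt_13 {X : Type*} [Fintype X] [DecidableEq X]
    (D : ℕ) (hD : 3 ≤ D)
    (E : ℤ → Matrix X X ℝ)
    (hEout : ∀ j : ℤ, j < 0 ∨ (D : ℤ) < j → E j = 0)
    (hEdiag : ∀ j, (E j).IsDiag)
    (hE01 : ∀ j (x : X), E j x x = 0 ∨ E j x x = 1)
    (hEsum : ∑ j ∈ Finset.Icc (0 : ℤ) D, E j = 1)
    (hEorth : ∀ i j : ℤ, E i * E j = if i = j then E i else 0)
    (A : Matrix X X ℝ)
    (hA : ∀ i h : ℤ, |i - h| ≠ 1 → E i * A * E h = 0)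
    (L R : Matrix X X ℝ)
    (hL : L = ∑ i ∈ Finset.Icc (1 : ℤ) D, E (i - 1) * A * E i)
    (hR : R = ∑ i ∈ Finset.Icc (0 : ℤ) (D - 1), E (i + 1) * A * E i)
    (θs : ℤ → ℝ) (As : Matrix X X ℝ)
    (hAs : As = ∑ i ∈ Finset.Icc (0 : ℤ) D, θs i • E i) :
    ∀ i : ℤ, 1 ≤ i → i ≤ D →
      (E (i - 1) * (A ^ 2 * As * A) * E i =
        θs (i - 1) • (R * L ^ 2 * E i) + θs (i - 1) • (L * R * L * E i) +
          θs (i + 1) • (L ^ 2 * R * E i)) ∧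
      (E (i - 1) * (A * As * A ^ 2) * E i =
        θs (i - 2) • (R * L ^ 2 * E i) + θs i • (L * R * L * E i) +
          θs i • (L ^ 2 * R * E i)) := by
  have habs : ∀ a b : ℤ, a ≠ b - 1 → a ≠ b + 1 → |a - b| ≠ 1 := by
    intro a b h1 h2
    rcases abs_cases (a - b) with ⟨h, _⟩ | ⟨h, _⟩ <;> rw [h] <;> omega
  have hAsE : ∀ j : ℤ, As * E j = θs j • E j := by
    intro j
    rw [hAs, Finset.sum_mul]
    by_cases hj : j ∈ Finset.Icc (0 : ℤ) D
    · rw [Finset.sum_eq_single j]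
      · rw [smul_mul_assoc, hEorth, if_pos rfl]
      · intro k _ hk
        rw [smul_mul_assoc, hEorth, if_neg hk, smul_zero]
      · exact fun h => absurd hj h
    · have hj0 : E j = 0 := by
        apply hEout
        simp only [Finset.mem_Icc, not_and, not_le] at hj
        omega
      rw [hj0, smul_zero]
      apply Finset.sum_eq_zero
      intro k _
      rw [mul_zero]
  have hAE : ∀ j : ℤ, A * E j = E (j - 1) * (A * E j) + E (j + 1) * (A * E j) := by
    intro j
    have expand : A * E j = ∑ k ∈ Finset.Icc (0 : ℤ) D, E k * (A * E j) := by
      rw [← Finset.sum_mul, hEsum, one_mul]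
    conv_lhs => rw [expand]
    have hterm : ∀ k ∈ Finset.Icc (0 : ℤ) D, E k * (A * E j) =
        (if k = j - 1 then E (j - 1) * (A * E j) else 0) +
        (if k = j + 1 then E (j + 1) * (A * E j) else 0) := by
      intro k _
      by_cases h1 : k = j - 1
      · subst h1
        rw [if_pos rfl, if_neg (by omega), add_zero]
      · by_cases h2 : k = j + 1
        · subst h2
          rw [if_neg (by omega), if_pos rfl, zero_add]
        · rw [if_neg h1, if_neg h2, add_zero, ← mul_assoc]
          exact hA k j (habs k j h1 h2)
    rw [Finset.sum_congr rfl hterm, Finset.sum_add_distrib,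
        Finset.sum_ite_eq', Finset.sum_ite_eq']
    have hz : ∀ m : ℤ, m ∉ Finset.Icc (0 : ℤ) D → E m * (A * E j) = 0 := by
      intro m hm
      rw [hEout m (by simp only [Finset.mem_Icc, not_and, not_le] at hm; omega), zero_mul]
    by_cases hm1 : (j - 1) ∈ Finset.Icc (0 : ℤ) D <;>
      by_cases hm2 : (j + 1) ∈ Finset.Icc (0 : ℤ) D
    · rw [if_pos hm1, if_pos hm2]
    · rw [if_pos hm1, if_neg hm2, hz _ hm2]
    · rw [if_neg hm1, if_pos hm2, hz _ hm1]
    · rw [if_neg hm1, if_neg hm2, hz _ hm1, hz _ hm2]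
  have hLE' : ∀ j : ℤ, L * E j = E (j - 1) * (A * E j) := by
    intro j
    rw [hL, Finset.sum_mul]
    by_cases hj : j ∈ Finset.Icc (1 : ℤ) D
    · rw [Finset.sum_eq_single j]
      · rw [mul_assoc (E (j - 1) * A), hEorth, if_pos rfl, mul_assoc]
      · intro k _ hk
        rw [mul_assoc (E (k - 1) * A), hEorth, if_neg hk, mul_zero]
      · exact fun h => absurd hj h
    · have h0 : ∀ k ∈ Finset.Icc (1 : ℤ) D, E (k - 1) * A * E k * E j = 0 := by
        intro k hk
        have hkj : k ≠ j := fun h => hj (h ▸ hk)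
        rw [mul_assoc (E (k - 1) * A), hEorth, if_neg hkj, mul_zero]
      rw [Finset.sum_eq_zero h0]
      simp only [Finset.mem_Icc, not_and, not_le] at hj
      rcases lt_or_ge j 1 with h | h
      · rw [hEout (j - 1) (Or.inl (by omega)), zero_mul]
      · rw [hEout j (Or.inr (by omega)), mul_zero, mul_zero]
  have hRE' : ∀ j : ℤ, R * E j = E (j + 1) * (A * E j) := by
    intro j
    rw [hR, Finset.sum_mul]
    by_cases hj : j ∈ Finset.Icc (0 : ℤ) ((D : ℤ) - 1)
    · rw [Finset.sum_eq_single j]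
      · rw [mul_assoc (E (j + 1) * A), hEorth, if_pos rfl, mul_assoc]
      · intro k _ hk
        rw [mul_assoc (E (k + 1) * A), hEorth, if_neg hk, mul_zero]
      · exact fun h => absurd hj h
    · have h0 : ∀ k ∈ Finset.Icc (0 : ℤ) ((D : ℤ) - 1), E (k + 1) * A * E k * E j = 0 := by
        intro k hk
        have hkj : k ≠ j := fun h => hj (h ▸ hk)
        rw [mul_assoc (E (k + 1) * A), hEorth, if_neg hkj, mul_zero]
      rw [Finset.sum_eq_zero h0]
      simp only [Finset.mem_Icc, not_and, not_le] at hj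
      rcases lt_or_ge j 0 with h | h
      · rw [hEout j (Or.inl h), mul_zero, mul_zero]
      · rw [hEout (j + 1) (Or.inr (by omega)), zero_mul]
  have hAsX : ∀ (j : ℤ) (Y : Matrix X X ℝ), As * (E j * Y) = θs j • (E j * Y) := by
    intro j Y
    rw [← mul_assoc, hAsE, smul_mul_assoc]
  have hLX : ∀ (j : ℤ) (Y : Matrix X X ℝ), L * (E j * Y) = E (j - 1) * (A * (E j * Y)) := by
    intro j Y
    rw [← mul_assoc, hLE', mul_assoc, mul_assoc]
  have hRX : ∀ (j : ℤ) (Y : Matrix X X ℝ), R * (E j * Y) = E (j + 1) * (A * (E j * Y)) := by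
    intro j Y
    rw [← mul_assoc, hRE', mul_assoc, mul_assoc]
  have hAXX : ∀ (j : ℤ) (Y : Matrix X X ℝ),
      A * (E j * Y) = E (j - 1) * (A * (E j * Y)) + E (j + 1) * (A * (E j * Y)) := by
    intro j Y
    conv_lhs => rw [← mul_assoc, hAE j]
    rw [add_mul, mul_assoc, mul_assoc, mul_assoc, mul_assoc]
  have hzero : ∀ (a b : ℤ) (Y : Matrix X X ℝ), |a - b| ≠ 1 → E a * (A * (E b * Y)) = 0 := by
    intro a b Y h
    rw [← mul_assoc, ← mul_assoc, hA a b h, zero_mul]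
  intro i hi1 hi2
  have p1 : R * L ^ 2 * E i = E (i - 1) * (A * (E (i - 2) * (A * (E (i - 1) * (A * E i))))) := by
    rw [pow_two, mul_assoc, mul_assoc, hLE' i, hLX (i - 1),
        (by ring : i - 1 - 1 = i - 2), hRX (i - 2), (by ring : i - 2 + 1 = i - 1)]
  have p2 : L * R * L * E i = E (i - 1) * (A * (E i * (A * (E (i - 1) * (A * E i))))) := by
    rw [mul_assoc, mul_assoc, hLE' i, hRX (i - 1), (by ring : i - 1 + 1 = i), hLX i]
  have p3 : L ^ 2 * R * E i = E (i - 1) * (A * (E i * (A * (E (i + 1) * (A * E i))))) := by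
    rw [pow_two, mul_assoc, mul_assoc, hRE' i, hLX (i + 1),
        (by ring : i + 1 - 1 = i), hLX i]
  constructor
  · have lhs1 : E (i - 1) * (A ^ 2 * As * A) * E i =
        E (i - 1) * (A * (A * (As * (A * E i)))) := by
      simp only [pow_two, mul_assoc]
    have c1 : As * (A * E i) =
        θs (i - 1) • (E (i - 1) * (A * E i)) + θs (i + 1) • (E (i + 1) * (A * E i)) := by
      conv_lhs => rw [hAE i, mul_add, hAsX, hAsX]
    have c2 : A * (As * (A * E i)) =
        θs (i - 1) • (E (i - 2) * (A * (E (i - 1) * (A * E i)))) +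
        θs (i - 1) • (E i * (A * (E (i - 1) * (A * E i)))) +
        (θs (i + 1) • (E i * (A * (E (i + 1) * (A * E i)))) +
         θs (i + 1) • (E (i + 2) * (A * (E (i + 1) * (A * E i))))) := by
      conv_lhs => rw [c1, mul_add, mul_smul_comm, mul_smul_comm, hAXX (i - 1), hAXX (i + 1),
          (by ring : i - 1 - 1 = i - 2), (by ring : i - 1 + 1 = i),
          (by ring : i + 1 - 1 = i), (by ring : i + 1 + 1 = i + 2), smul_add, smul_add]
    rw [lhs1, c2, p1, p2, p3]
    simp only [mul_add, mul_smul_comm]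
    rw [hzero (i - 1) (i + 2) (A * (E (i + 1) * (A * E i)))
        (habs (i - 1) (i + 2) (by omega) (by omega))]
    simp only [smul_zero, add_zero]
  · have lhs2 : E (i - 1) * (A * As * A ^ 2) * E i =
        E (i - 1) * (A * (As * (A * (A * E i)))) := by
      simp only [pow_two, mul_assoc]
    have d1 : A * (A * E i) =
        E (i - 2) * (A * (E (i - 1) * (A * E i))) +
        E i * (A * (E (i - 1) * (A * E i))) +
        (E i * (A * (E (i + 1) * (A * E i))) +
         E (i + 2) * (A * (E (i + 1) * (A * E i)))) := by
      conv_lhs => rw [hAE i, mul_add, hAXX (i - 1), hAXX (i + 1),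
          (by ring : i - 1 - 1 = i - 2), (by ring : i - 1 + 1 = i),
          (by ring : i + 1 - 1 = i), (by ring : i + 1 + 1 = i + 2)]
    have d2 : As * (A * (A * E i)) =
        θs (i - 2) • (E (i - 2) * (A * (E (i - 1) * (A * E i)))) +
        θs i • (E i * (A * (E (i - 1) * (A * E i)))) +
        (θs i • (E i * (A * (E (i + 1) * (A * E i)))) +
         θs (i + 2) • (E (i + 2) * (A * (E (i + 1) * (A * E i))))) := by
      conv_lhs => rw [d1, mul_add, mul_add, mul_add, hAsX, hAsX, hAsX, hAsX]
    rw [lhs2, d2, p1, p2, p3]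
    simp only [mul_add, mul_smul_comm]
    rw [hzero (i - 1) (i + 2) (A * (E (i + 1) * (A * E i)))
        (habs (i - 1) (i + 2) (by omega) (by omega))]
    simp only [smul_zero, add_zero]
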